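/- Let p : ℂ → ℂ be a polynomial, let J ⊆ ℂ be a nonempty compact set with p(J) ⊆ J, let z₀ ∈ J, and let (a,b,c) ∈ ℂ³. Consider the skew product F(z,w) = (p(z), w² + a z² + b z + c). If the forward orbit {Fⁿ(z₀,0) : n ∈ ℕ} is a bounded subset of ℂ², then |a z₀² + b z₀ + c| ≤ 2 √( sup_{z ∈ J} |a z² + b z + c| ). -/

import Mathlib

/-- If the vertical critical point `(z₀, 0)` over a point `z₀` of a compact `p`-invariant
set `J` has bounded orbit under the quadratic skew product
`F(z,w) = (p(z), w² + a z² + b z + c)`, then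
`|a z₀² + b z₀ + c| ≤ 2 √(sup_{z ∈ J} |a z² + b z + c|)`. -/
theorem bounded_critical_orbit_estimate
    (p : Polynomial ℂ) (J : Set ℂ) (hJne : J.Nonempty) (hJc : IsCompact J)
    (hJinv : ∀ z ∈ J, p.eval z ∈ J) (z₀ : ℂ) (hz₀ : z₀ ∈ J) (a b c : ℂ)
    (F : ℂ × ℂ → ℂ × ℂ)
    (hF : ∀ q : ℂ × ℂ, F q = (p.eval q.1, q.2 ^ 2 + a * q.1 ^ 2 + b * q.1 + c))
    (hbdd : Bornology.IsBounded (Set.range fun n => F^[n] (z₀, 0))) :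
    ‖a * z₀ ^ 2 + b * z₀ + c‖ ≤
      2 * Real.sqrt (sSup ((fun z => ‖a * z ^ 2 + b * z + c‖) '' J)) := by
  set q : ℂ → ℂ := fun z => a * z ^ 2 + b * z + c with hq
  set M : ℝ := sSup ((fun z => ‖q z‖) '' J) with hM
  -- the image is compact, hence bounded above, so `M` is a true upper bound
  have hScomp : IsCompact ((fun z => ‖q z‖) '' J) := by
    apply hJc.image
    continuity
  have hub : ∀ z ∈ J, ‖q z‖ ≤ M := fun z hz =>
    le_csSup hScomp.bddAbove ⟨z, hz, rfl⟩
  have hq0 : ‖q z₀‖ ≤ M := hub z₀ hz₀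
  have hM0 : 0 ≤ M := le_trans (norm_nonneg _) hq0
  have hsq : Real.sqrt M * Real.sqrt M = M := Real.mul_self_sqrt hM0
  have hs0 : 0 ≤ Real.sqrt M := Real.sqrt_nonneg M
  show ‖q z₀‖ ≤ 2 * Real.sqrt M
  by_cases hM4 : M ≤ 4
  · -- small sup: trivial estimate `|q z₀| ≤ M ≤ 2 √M`
    have hs2 : Real.sqrt M ≤ 2 := by nlinarith
    nlinarith
  push_neg at hM4
  by_contra hcon
  push_neg at hcon
  set r : ℝ := ‖q z₀‖ with hr
  have hrlt : 2 * Real.sqrt M < r := hcon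
  have hsM : 2 < Real.sqrt M := by nlinarith
  have hr4 : 4 < r := by nlinarith
  have hr0 : 0 < r := by linarith
  have hr2 : 4 * M < r ^ 2 := by nlinarith
  -- expansion factor
  set lam : ℝ := r - M / r with hlam
  have hMr : M / r < r - 1 := by
    rw [div_lt_iff₀ hr0]; nlinarith
  have hlam1 : 1 < lam := by
    have := hMr; simp only [hlam]; linarith
  -- orbit coordinates
  set g : ℕ → ℂ × ℂ := fun n => F^[n] (z₀, 0) with hg
  have hg0 : g 0 = (z₀, 0) := rfl
  have hgs : ∀ n, g (n + 1) = ((p.eval (g n).1), ((g n).2) ^ 2 + q ((g n).1)) := by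
    intro n
    have : g (n + 1) = F (g n) := by
      simp [hg, Function.iterate_succ_apply']
    rw [this, hF]
    simp only [hq]
    ring_nf
  have hzJ : ∀ n, (g n).1 ∈ J := by
    intro n
    induction n with
    | zero => simpa [hg0] using hz₀
    | succ n ih => rw [hgs n]; exact hJinv _ ih
  -- lower bound for the modulus of the second coordinate
  have htri : ∀ (x y : ℂ), (‖x‖) ^ 2 - ‖y‖ ≤ ‖x ^ 2 + y‖ := by
    intro x y
    have h := norm_add_le (x ^ 2 + y) (-y)
    simp only [add_neg_cancel_right, norm_neg] at h
    have hx2 : ‖x ^ 2‖ = (‖x‖) ^ 2 := norm_pow _ _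
    linarith [hx2 ▸ h]
  have key : ∀ n, r * lam ^ n ≤ ‖(g (n + 1)).2‖ := by
    intro n
    induction n with
    | zero =>
      have : (g 1).2 = q z₀ := by
        rw [hgs 0]; simp [hg0]
      simp [this, ← hr]
    | succ n ih =>
      have hlamn : (1:ℝ) ≤ lam ^ n := one_le_pow₀ (le_of_lt hlam1)
      set s : ℝ := ‖(g (n + 1)).2‖ with hs
      have hsr : r ≤ s := by
        calc r = r * 1 := (mul_one r).symm
        _ ≤ r * lam ^ n := by nlinarith
        _ ≤ s := ih
      have hstep : s ^ 2 - M ≤ ‖(g (n + 2)).2‖ := by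
        have := htri ((g (n+1)).2) (q ((g (n+1)).1))
        rw [hgs (n+1)]
        calc s ^ 2 - M ≤ (‖(g (n+1)).2‖) ^ 2 - ‖q ((g (n+1)).1)‖ := by
              have := hub _ (hzJ (n+1)); simp only [← hs]; linarith
        _ ≤ _ := this
      have hMs : M ≤ M / r * s := by
        rw [div_mul_eq_mul_div, le_div_iff₀ hr0]
        nlinarith
      have : r * lam ^ (n + 1) ≤ s ^ 2 - M := by
        have h1 : r * lam ^ (n + 1) = (r * lam ^ n) * lam := by ring
        calc r * lam ^ (n + 1) = (r * lam ^ n) * lam := by ring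
        _ ≤ s * lam := by nlinarith
        _ = s * r - s * (M / r) := by rw [hlam]; ring
        _ ≤ s ^ 2 - M := by nlinarith
      linarith
  -- contradiction with boundedness
  rw [Metric.isBounded_iff_subset_closedBall 0] at hbdd
  obtain ⟨C, hC⟩ := hbdd
  have hCb : ∀ n, ‖(g n).2‖ ≤ C := by
    intro n
    have h1 : g n ∈ Metric.closedBall (0 : ℂ × ℂ) C := hC ⟨n, rfl⟩
    rw [Metric.mem_closedBall, dist_zero_right] at h1
    calc ‖(g n).2‖ = ‖(g n).2‖ := rfl
    _ ≤ ‖g n‖ := norm_snd_le _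
    _ ≤ C := h1
  obtain ⟨n, hn⟩ := pow_unbounded_of_one_lt C hlam1
  have h1 : C < r * lam ^ n := by nlinarith [pow_pos (lt_trans one_pos hlam1) n]
  exact absurd (h1.trans_le (le_trans (key n) (hCb (n+1)))) (lt_irrefl C)
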